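/- The symplectic Cayley transform Φ(S) = ½ J (S + I)(S - I)⁻¹, defined on Sp₀(n) = {S ∈ Sp(n) : det(S-I) ≠ 0}, is injective, with inverse given by Φ⁻¹(M) = (M - ½J)⁻¹ (M + ½J). -/

import Mathlib

open Matrix

/-- The standard symplectic matrix `J = [[0, I], [-I, 0]]` with `n × n` blocks. -/
def stdJ (n : ℕ) : Matrix (Fin n ⊕ Fin n) (Fin n ⊕ Fin n) ℝ :=
  Matrix.fromBlocks 0 1 (-1) 0

/-- The symplectic Cayley transform `Φ(S) = ½ J (S + I)(S - I)⁻¹`. -/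
noncomputable def sympCayley (n : ℕ) (S : Matrix (Fin n ⊕ Fin n) (Fin n ⊕ Fin n) ℝ) :
    Matrix (Fin n ⊕ Fin n) (Fin n ⊕ Fin n) ℝ :=
  (1 / 2 : ℝ) • (stdJ n * (S + 1) * (S - 1)⁻¹)

lemma stdJ_mul_stdJ (n : ℕ) : stdJ n * stdJ n = -1 := by
  simp [stdJ, Matrix.fromBlocks_multiply, ← Matrix.fromBlocks_one, Matrix.fromBlocks_neg]

lemma stdJ_mul_neg_stdJ (n : ℕ) : stdJ n * (-stdJ n) = 1 := by
  rw [mul_neg, stdJ_mul_stdJ, neg_neg]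

lemma cayley_key (n : ℕ) (S : Matrix (Fin n ⊕ Fin n) (Fin n ⊕ Fin n) ℝ)
    (hdet : (S - 1).det ≠ 0) :
    IsUnit (sympCayley n S - (1 / 2 : ℝ) • stdJ n).det ∧
    (sympCayley n S - (1 / 2 : ℝ) • stdJ n)⁻¹ *
        (sympCayley n S + (1 / 2 : ℝ) • stdJ n) = S := by
  set J := stdJ n with hJdef
  set A := S - 1 with hAdef
  have hA : IsUnit A.det := isUnit_iff_ne_zero.mpr hdet
  have hAA : A⁻¹ * A = 1 := nonsing_inv_mul A hA
  have hAA' : A * A⁻¹ = 1 := mul_nonsing_inv A hA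
  -- Φ(S) - ½J = J A⁻¹
  have e1 : (sympCayley n S - (1 / 2 : ℝ) • J) * A = J := by
    rw [sub_mul, sympCayley, smul_mul_assoc, smul_mul_assoc, mul_assoc, hAA, mul_one,
      ← smul_sub, ← mul_sub, show S + 1 - A = 2 by rw [hAdef]; noncomm_ring; simp [two_smul, one_add_one_eq_two], mul_two, smul_add,
      ← add_smul]
    norm_num
    rfl
  have e2 : (sympCayley n S + (1 / 2 : ℝ) • J) * A = J * S := by
    rw [add_mul, sympCayley, smul_mul_assoc, smul_mul_assoc, mul_assoc, hAA, mul_one,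
      ← smul_add, ← mul_add, show S + 1 + A = S + S by rw [hAdef]; noncomm_ring, mul_add, smul_add,
      ← add_smul]
    norm_num
    rfl
  have m1 : sympCayley n S - (1 / 2 : ℝ) • J = J * A⁻¹ := by
    have := congrArg (· * A⁻¹) e1
    simpa [mul_assoc, hAA'] using this
  have m2 : sympCayley n S + (1 / 2 : ℝ) • J = J * S * A⁻¹ := by
    have := congrArg (· * A⁻¹) e2
    simpa [mul_assoc, hAA'] using this
  have hright : (J * A⁻¹) * (A * (-J)) = 1 := by
    rw [mul_assoc, ← mul_assoc A⁻¹, hAA, one_mul, stdJ_mul_neg_stdJ]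
  have hu : IsUnit (sympCayley n S - (1 / 2 : ℝ) • J).det := by
    rw [m1]; exact Matrix.isUnit_det_of_right_inverse hright
  refine ⟨hu, ?_⟩
  have hinv : (sympCayley n S - (1 / 2 : ℝ) • J)⁻¹ = A * (-J) := by
    rw [m1]; exact Matrix.inv_eq_right_inv hright
  rw [hinv, m2]
  have hcomm : A * S = S * A := by rw [hAdef]; noncomm_ring
  calc A * (-J) * (J * S * A⁻¹)
      = A * (-(J * J)) * S * A⁻¹ := by noncomm_ring
    _ = A * S * A⁻¹ := by rw [stdJ_mul_stdJ]; noncomm_ring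
    _ = S * (A * A⁻¹) := by rw [hcomm, mul_assoc]
    _ = S := by rw [hAA', mul_one]

/-- The symplectic Cayley transform is injective on `Sp₀(n)`, with inverse
`M ↦ (M - ½J)⁻¹ (M + ½J)`. -/
theorem cayley_transform_injective (n : ℕ)
    (S : Matrix (Fin n ⊕ Fin n) (Fin n ⊕ Fin n) ℝ)
    (hS : Sᵀ * stdJ n * S = stdJ n) (hdet : (S - 1).det ≠ 0) :
    IsUnit (sympCayley n S - (1 / 2 : ℝ) • stdJ n).det ∧
    (sympCayley n S - (1 / 2 : ℝ) • stdJ n)⁻¹ *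
        (sympCayley n S + (1 / 2 : ℝ) • stdJ n) = S ∧
    ∀ S' : Matrix (Fin n ⊕ Fin n) (Fin n ⊕ Fin n) ℝ,
      S'ᵀ * stdJ n * S' = stdJ n → (S' - 1).det ≠ 0 →
        sympCayley n S = sympCayley n S' → S = S' := by
  obtain ⟨h1, h2⟩ := cayley_key n S hdet
  refine ⟨h1, h2, fun S' _ hdet' heq => ?_⟩
  obtain ⟨_, h2'⟩ := cayley_key n S' hdet'
  rw [← h2, ← h2', heq]
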